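/- arXiv:1605.03326 — 2 statements merged into one kernel-verified Lean document; each statement's English description precedes it below -/
import Mathlib

section
/- Let α > -1/2, A_α(x) = |x|^{2α+1}, and for x ≠ 0 define Θ_0(x,y) = sgn(x)/(2A_α(x)) + sgn(y)/(2A_α(y)) for y ∈ [-|x|,|x|]. Then for every even-index polynomial b_{2m}(y) = (y/2)^{2m}/((α+1)_m m!), we have ∫_{-|x|}^{|x|} Θ_0(x,y) b_{2m}(y) A_α(y) dy = b_{2m+1}(x), where b_{2m+1}(x) = (x/2)^{2m+1}/((α+1)_{m+1} m!). -/
/-- The Dunkl–Taylor monomials: `b_{2m}(x) = (x/2)^{2m}/((α+1)_m m!)` and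
`b_{2m+1}(x) = (x/2)^{2m+1}/((α+1)_{m+1} m!)`, with `(a)_m` the Pochhammer symbol. -/
noncomputable def dunklB (α : ℝ) (p : ℕ) (x : ℝ) : ℝ :=
  if Even p then (x / 2) ^ p / ((ascPochhammer ℝ (p / 2)).eval (α + 1) * (p / 2).factorial)
  else (x / 2) ^ p / ((ascPochhammer ℝ (p / 2 + 1)).eval (α + 1) * (p / 2).factorial)

/-- The kernel `Θ_0(x,y) = sgn(x)/(2|x|^{2α+1}) + sgn(y)/(2|y|^{2α+1})`. -/
noncomputable def theta0 (α : ℝ) (x y : ℝ) : ℝ :=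
  Real.sign x / (2 * |x| ^ (2 * α + 1)) + Real.sign y / (2 * |y| ^ (2 * α + 1))

open MeasureTheory intervalIntegral Real

lemma measurable_realSign : Measurable Real.sign := by
  unfold Real.sign
  exact Measurable.ite (measurableSet_lt measurable_id measurable_const) measurable_const
    (Measurable.ite (measurableSet_lt measurable_const measurable_id) measurable_const
      measurable_const)

lemma integral_odd_zero {f : ℝ → ℝ} {a : ℝ} (ha : 0 ≤ a)
    (hodd : ∀ y, f (-y) = -f y)
    (hi : IntervalIntegrable f volume (-a) a) :
    ∫ y in (-a)..a, f y = 0 := by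
  have h1 : IntervalIntegrable f volume (-a) 0 :=
    hi.mono_set (Set.uIcc_subset_uIcc_iff_le.2 (by constructor <;>
      simp [min_le_iff, le_max_iff, ha, neg_nonpos.2 ha]))
  have h2 : IntervalIntegrable f volume 0 a :=
    hi.mono_set (Set.uIcc_subset_uIcc_iff_le.2 (by constructor <;>
      simp [min_le_iff, le_max_iff, ha, neg_nonpos.2 ha]))
  have hadd := intervalIntegral.integral_add_adjacent_intervals h1 h2
  have hneg : (∫ y in (-a)..(0:ℝ), f y) = - ∫ y in (0:ℝ)..a, f y := by
    have := intervalIntegral.integral_comp_neg (a := (0:ℝ)) (b := a) f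
    rw [neg_zero] at this
    rw [← this]
    simp only [hodd]
    exact intervalIntegral.integral_neg
  rw [← hadd, hneg]; ring

/-- `∫_{-|x|}^{|x|} Θ_0(x,y) b_{2m}(y) A_α(y) dy = b_{2m+1}(x)` for `x ≠ 0`,
where `A_α(y) = |y|^{2α+1}`. -/
theorem stmt2 (α : ℝ) (hα : -1/2 < α) (m : ℕ) (x : ℝ) (hx : x ≠ 0) :
    ∫ y in (-|x|)..|x|, theta0 α x y * dunklB α (2 * m) y * |y| ^ (2 * α + 1)
      = dunklB α (2 * m + 1) x := by
  set a : ℝ := |x| with ha_def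
  have ha : 0 < a := abs_pos.2 hx
  have hα1 : 0 < α + 1 := by linarith
  set C : ℝ := (ascPochhammer ℝ m).eval (α + 1) * m.factorial with hC_def
  have hP : 0 < (ascPochhammer ℝ m).eval (α + 1) := ascPochhammer_pos m (α + 1) hα1
  have hF : (0:ℝ) < m.factorial := by exact_mod_cast m.factorial_pos
  have hC : 0 < C := by rw [hC_def]; positivity
  have hax : (0:ℝ) < a ^ (2 * α + 1) := Real.rpow_pos_of_pos ha _
  have h1 : Continuous fun y : ℝ => |y| ^ (2 * α + 1) :=
    continuous_abs.rpow_const (fun y => Or.inr (by linarith))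
  set f : ℝ → ℝ := fun y => (Real.sign x / (2 * a ^ (2 * α + 1) * C)) *
      ((y / 2) ^ (2 * m) * |y| ^ (2 * α + 1)) with hf_def
  set g : ℝ → ℝ := fun y => Real.sign y * ((y / 2) ^ (2 * m) / (2 * C)) with hg_def
  -- pointwise identity
  have hpt : ∀ y : ℝ, theta0 α x y * dunklB α (2 * m) y * |y| ^ (2 * α + 1)
      = f y + g y := by
    intro y
    have hb : dunklB α (2 * m) y = (y / 2) ^ (2 * m) / C := by
      simp [dunklB, Nat.mul_div_cancel_left m (by norm_num : 0 < 2), hC_def,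
        even_two_mul]
    rw [hb, theta0, hf_def, hg_def]
    rcases eq_or_ne y 0 with rfl | hy
    · simp [Real.zero_rpow (show (2 * α + 1 : ℝ) ≠ 0 by linarith)]
    · have hay : (0:ℝ) < |y| ^ (2 * α + 1) := Real.rpow_pos_of_pos (abs_pos.2 hy) _
      field_simp
      ring
  simp only [hpt]
  -- integrability
  have hcf : Continuous f := by fun_prop
  have hif : IntervalIntegrable f volume (-a) a := hcf.intervalIntegrable _ _
  have hig : IntervalIntegrable g volume (-a) a := by
    rw [intervalIntegrable_iff]
    apply MeasureTheory.Integrable.bdd_mul (c := 1)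
    · exact (Continuous.integrableOn_uIoc (by fun_prop))
    · exact measurable_realSign.aestronglyMeasurable.restrict
    · refine ae_of_all _ (fun y => ?_)
      rcases Real.sign_apply_eq y with h | h | h <;> simp [h]
  rw [intervalIntegral.integral_add hif hig]
  -- the odd part vanishes
  have hg0 : ∫ y in (-a)..a, g y = 0 := by
    apply integral_odd_zero ha.le _ hig
    intro y
    simp only [hg_def]
    rw [Real.sign_neg]
    have : (-y / 2) ^ (2 * m) = (y / 2) ^ (2 * m) := by
      rw [neg_div, Even.neg_pow (even_two_mul m)]
    rw [this]; ring
  rw [hg0, add_zero]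
  -- the even part
  have hr : (-1:ℝ) < 2 * (m:ℝ) + 2 * α + 1 := by
    have : (0:ℝ) ≤ (m:ℝ) := Nat.cast_nonneg m
    linarith
  have hkey : ∀ y ∈ Set.uIcc (0:ℝ) a, (y / 2) ^ (2 * m) * |y| ^ (2 * α + 1)
      = (1 / 4 ^ m) * y ^ (2 * (m:ℝ) + 2 * α + 1) := by
    intro y hy
    rw [Set.uIcc_of_le ha.le] at hy
    rcases eq_or_ne y 0 with rfl | hy0
    · rcases Nat.eq_zero_or_pos m with rfl | hm
      · simp [Real.zero_rpow (show (2 * α + 1 : ℝ) ≠ 0 by linarith),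
          Real.zero_rpow (show (2 * ((0:ℕ):ℝ) + 2 * α + 1 : ℝ) ≠ 0 by norm_num; linarith)]
      · have hmr : (0:ℝ) < (m:ℝ) := by exact_mod_cast hm
        simp [zero_pow (by omega : 2 * m ≠ 0),
          Real.zero_rpow (show (2 * (m:ℝ) + 2 * α + 1 : ℝ) ≠ 0 by nlinarith)]
    · have hy0' : 0 < y := lt_of_le_of_ne hy.1 (Ne.symm hy0)
      have h4 : ((2:ℝ)) ^ (2 * m) = 4 ^ m := by rw [pow_mul]; norm_num
      rw [abs_of_pos hy0', div_pow, h4, ← Real.rpow_natCast y (2 * m),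
        div_mul_eq_mul_div, ← Real.rpow_add hy0',
        show (((2 * m : ℕ):ℝ) + (2 * α + 1)) = 2 * (m:ℝ) + 2 * α + 1 by push_cast; ring]
      ring
  have hch : Continuous (fun y : ℝ => (y / 2) ^ (2 * m) * |y| ^ (2 * α + 1)) := by fun_prop
  have hsplit : (∫ y in (-a)..a, (y / 2) ^ (2 * m) * |y| ^ (2 * α + 1))
      = 2 * ∫ y in (0:ℝ)..a, (y / 2) ^ (2 * m) * |y| ^ (2 * α + 1) := by
    have hi1 : IntervalIntegrable (fun y : ℝ => (y / 2) ^ (2 * m) * |y| ^ (2 * α + 1))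
        volume (-a) 0 := hch.intervalIntegrable _ _
    have hi2 : IntervalIntegrable (fun y : ℝ => (y / 2) ^ (2 * m) * |y| ^ (2 * α + 1))
        volume 0 a := hch.intervalIntegrable _ _
    rw [← intervalIntegral.integral_add_adjacent_intervals hi1 hi2]
    have hcn := intervalIntegral.integral_comp_neg (a := (0:ℝ)) (b := a)
      (fun y => (y / 2) ^ (2 * m) * |y| ^ (2 * α + 1))
    rw [neg_zero] at hcn
    rw [← hcn]
    have heq : ∀ y : ℝ, (-y / 2) ^ (2 * m) * |(-y)| ^ (2 * α + 1)
        = (y / 2) ^ (2 * m) * |y| ^ (2 * α + 1) := by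
      intro y; rw [neg_div, Even.neg_pow (even_two_mul m), abs_neg]
    simp only [heq]
    ring
  have hinner : (∫ y in (0:ℝ)..a, (y / 2) ^ (2 * m) * |y| ^ (2 * α + 1))
      = (1 / 4 ^ m) * (a ^ (2 * (m:ℝ) + 2 * α + 2) / (2 * (m:ℝ) + 2 * α + 2)) := by
    rw [intervalIntegral.integral_congr hkey, intervalIntegral.integral_const_mul,
      integral_rpow (Or.inl hr),
      Real.zero_rpow (show (2 * (m:ℝ) + 2 * α + 1 + 1 : ℝ) ≠ 0 by
        have : (0:ℝ) ≤ (m:ℝ) := Nat.cast_nonneg m; nlinarith),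
      show (2 * (m:ℝ) + 2 * α + 1 + 1) = 2 * (m:ℝ) + 2 * α + 2 by ring]
    ring
  have heven : ∫ y in (-a)..a, f y
      = (Real.sign x / (2 * a ^ (2 * α + 1) * C)) *
        (2 * ((1 / 4 ^ m) * (a ^ (2 * (m:ℝ) + 2 * α + 2) / (2 * (m:ℝ) + 2 * α + 2)))) := by
    simp only [hf_def]
    rw [intervalIntegral.integral_const_mul, hsplit, hinner]
  rw [heven]
  -- final algebra
  have hsa : a ^ (2 * (m:ℝ) + 2 * α + 2) = a ^ (2 * α + 1) * a ^ (2 * m + 1) := by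
    rw [show (2 * (m:ℝ) + 2 * α + 2) = (2 * α + 1) + ((2 * m + 1 : ℕ):ℝ) by push_cast; ring,
      Real.rpow_add ha, Real.rpow_natCast]
  have hDpos : (0:ℝ) < 2 * (m:ℝ) + 2 * α + 2 := by
    have : (0:ℝ) ≤ (m:ℝ) := Nat.cast_nonneg m; linarith
  have hsx : Real.sign x * a ^ (2 * m + 1) = x ^ (2 * m + 1) := by
    rcases hx.lt_or_gt with h | h
    · rw [Real.sign_of_neg h, show a = -x from by rw [ha_def, abs_of_neg h],
        Odd.neg_pow ⟨m, by ring⟩]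
      ring
    · rw [Real.sign_of_pos h, show a = x from by rw [ha_def, abs_of_pos h], one_mul]
  have hmain : (Real.sign x / (2 * a ^ (2 * α + 1) * C)) *
        (2 * ((1 / 4 ^ m) * (a ^ (2 * (m:ℝ) + 2 * α + 2) / (2 * (m:ℝ) + 2 * α + 2))))
      = x ^ (2 * m + 1) / (4 ^ m * C * (2 * (m:ℝ) + 2 * α + 2)) := by
    rw [hsa, ← hsx]
    field_simp
  rw [hmain, dunklB, if_neg (by simp [Nat.even_add_one, parity_simps]),
    show (2 * m + 1) / 2 = m from by omega, ascPochhammer_succ_eval, hC_def]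
  have hM : (0:ℝ) < α + 1 + (m:ℝ) := by
    have : (0:ℝ) ≤ (m:ℝ) := Nat.cast_nonneg m; linarith
  rw [show (4:ℝ) ^ m = 2 ^ m * 2 ^ m by rw [← mul_pow]; norm_num]
  field_simp
  rw [mul_div_assoc, show (α + 1 + (m:ℝ)) / ((m:ℝ) + α + 1) = 1 by
    rw [div_eq_one_iff_eq (by linarith)]; ring]
  rw [mul_one, div_pow, show (2:ℝ) ^ (2 * m + 1) = (2 ^ m) ^ 2 * 2 by ring]
  field_simp
end

section
/- Let α > -1/2, A_α(x) = |x|^{2α+1}, and for x ≠ 0 define Θ_0(x,y) = sgn(x)/(2A_α(x)) + sgn(y)/(2A_α(y)) for y ∈ [-|x|,|x|]. Then for b_{2m+1}(y) = (y/2)^{2m+1}/((α+1)_{m+1} m!) one has ∫_{-|x|}^{|x|} Θ_0(x,y) b_{2m+1}(y) A_α(y) dy = b_{2m+2}(x), where b_{2m+2}(x) = (x/2)^{2m+2}/((α+1)_{m+1} (m+1)!). -/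
lemma odd_int_zero (a : ℝ) (f : ℝ → ℝ) (hf : Continuous f) (hodd : ∀ y, f (-y) = -f y) :
    ∫ y in (-a)..a, f y = 0 := by
  have h1 : ∫ y in (-a)..(0:ℝ), f y = ∫ y in (0:ℝ)..a, f (-y) := by
    rw [intervalIntegral.integral_comp_neg]; simp
  rw [← intervalIntegral.integral_add_adjacent_intervals (a := -a) (b := 0) (c := a)
      (hf.intervalIntegrable _ _) (hf.intervalIntegrable _ _), h1]
  simp [hodd]

lemma even_int (a : ℝ) (f : ℝ → ℝ) (hf : Continuous f) (hev : ∀ y, f (-y) = f y) :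
    ∫ y in (-a)..a, f y = 2 * ∫ y in (0:ℝ)..a, f y := by
  have h1 : ∫ y in (-a)..(0:ℝ), f y = ∫ y in (0:ℝ)..a, f (-y) := by
    rw [intervalIntegral.integral_comp_neg]; simp
  rw [← intervalIntegral.integral_add_adjacent_intervals (a := -a) (b := 0) (c := a)
      (hf.intervalIntegrable _ _) (hf.intervalIntegrable _ _), h1]
  simp [hev]; ring


/-- `∫_{-|x|}^{|x|} Θ_0(x,y) b_{2m+1}(y) A_α(y) dy = b_{2m+2}(x)` for `x ≠ 0`,
where `A_α(y) = |y|^{2α+1}`. -/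
theorem stmt3 (α : ℝ) (hα : -1/2 < α) (m : ℕ) (x : ℝ) (hx : x ≠ 0) :
    ∫ y in (-|x|)..|x|, theta0 α x y * dunklB α (2 * m + 1) y * |y| ^ (2 * α + 1)
      = dunklB α (2 * m + 2) x := by
  have hp : (0:ℝ) < 2 * α + 1 := by linarith
  set C : ℝ := (ascPochhammer ℝ (m + 1)).eval (α + 1) * (m.factorial : ℝ) with hC
  have hCpos : 0 < C := by
    apply mul_pos (ascPochhammer_pos _ _ (by linarith))
    exact_mod_cast Nat.factorial_pos m
  have hd1 : (2 * m + 1) / 2 = m := by omega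
  have hne : ¬ Even (2 * m + 1) := by simp [Nat.even_iff]
  have hsgnpow : ∀ y : ℝ, Real.sign y * y ^ (2 * m + 1) = |y| ^ (2 * m + 1) := by
    intro y
    rcases lt_trichotomy y 0 with h | h | h
    · rw [Real.sign_of_neg h, abs_of_neg h, Odd.neg_pow ⟨m, by ring⟩]; ring
    · simp [h]
    · rw [Real.sign_of_pos h, abs_of_pos h]; ring
  have claim : ∀ y : ℝ, theta0 α x y * dunklB α (2 * m + 1) y * |y| ^ (2 * α + 1)
      = (Real.sign x / (2 * |x| ^ (2 * α + 1) * C * 2 ^ (2 * m + 1)))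
          * (y ^ (2 * m + 1) * |y| ^ (2 * α + 1))
        + (1 / (2 ^ (2 * m + 2) * C)) * |y| ^ (2 * m + 1) := by
    intro y
    rw [theta0, dunklB, if_neg hne, hd1]
    rcases eq_or_ne y 0 with rfl | hy
    · simp [Real.sign_zero, zero_pow, Nat.succ_ne_zero]
    · have hyp : (0:ℝ) < |y| ^ (2 * α + 1) := Real.rpow_pos_of_pos (abs_pos.mpr hy) _
      have hP0 : Polynomial.eval (α + 1) (ascPochhammer ℝ (m + 1)) ≠ 0 :=
        (ascPochhammer_pos _ _ (by linarith)).ne'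
      rw [div_pow y 2, ← hsgnpow y, hC]
      field_simp
      ring
  simp only [claim]
  set a := |x| with ha
  set pI := (2:ℝ) * α + 1
  have hcont1 : Continuous fun y : ℝ => y ^ (2 * m + 1) * |y| ^ pI := by
    exact (continuous_pow _).mul
      (Continuous.rpow_const continuous_abs (fun _ => Or.inr hp.le))
  have hcont2 : Continuous fun y : ℝ => |y| ^ (2 * m + 1) := continuous_abs.pow _
  rw [intervalIntegral.integral_add
      ((hcont1.intervalIntegrable _ _).const_mul _)
      ((hcont2.intervalIntegrable _ _).const_mul _),
    intervalIntegral.integral_const_mul, intervalIntegral.integral_const_mul]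
  have hodd0 : ∫ y in (-a)..a, y ^ (2 * m + 1) * |y| ^ pI = 0 := by
    apply odd_int_zero _ _ hcont1
    intro y
    rw [Odd.neg_pow ⟨m, by ring⟩, abs_neg]; ring
  have heven : ∫ y in (-a)..a, |y| ^ (2 * m + 1)
      = 2 * ∫ y in (0:ℝ)..a, |y| ^ (2 * m + 1) := by
    apply even_int _ _ hcont2
    intro y; rw [abs_neg]
  have hpos : ∫ y in (0:ℝ)..a, |y| ^ (2 * m + 1) = a ^ (2 * m + 2) / (2 * m + 2) := by
    rw [intervalIntegral.integral_congr (g := fun y => y ^ (2 * m + 1))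
      (fun y hy => by
        rw [Set.uIcc_of_le (abs_nonneg x)] at hy
        simp only
        rw [abs_of_nonneg hy.1])]
    rw [integral_pow]
    norm_num
    ring_nf
  rw [hodd0, heven, hpos, mul_zero, zero_add]
  rw [dunklB, if_pos ⟨m + 1, by ring⟩]
  have hd2 : (2 * m + 2) / 2 = m + 1 := by omega
  rw [hd2]
  have hax : a ^ (2 * m + 2) = x ^ (2 * m + 2) := by
    rw [ha, ← abs_pow, abs_of_nonneg (Even.pow_nonneg ⟨m + 1, by ring⟩ x)]
  rw [hax, div_pow x 2, Nat.factorial_succ, hC]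
  have hP : Polynomial.eval (α + 1) (ascPochhammer ℝ (m + 1)) ≠ 0 :=
    (ascPochhammer_pos _ _ (by linarith)).ne'
  have hmf : (m.factorial : ℝ) ≠ 0 := by exact_mod_cast (Nat.factorial_pos m).ne'
  have hm1 : (m : ℝ) + 1 ≠ 0 := by positivity
  push_cast
  field_simp
end
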